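/- Let Y be a q-algebra of subsets of ℕ and let π be a density on Y having the Darboux property on Y. If y : ℕ → [0,1] is a π-uniformly measurable mapping and x : ℕ → [0,1] is a mapping such that lim_{n→∞} |y(n) − x(n)| = 0, then x is also a π-uniformly measurable mapping. -/

import Mathlib

open Filter Topology

/-- A family `Y` of subsets of a set `M` (here: the type `α`) is a *q-algebra* if it contains
the whole set, is closed under disjoint unions and under relative complements. -/
def IsQAlgebra {α : Type*} (Y : Set (Set α)) : Prop :=
  Set.univ ∈ Y ∧
  (∀ A B : Set α, A ∈ Y → B ∈ Y → A ∩ B = ∅ → A ∪ B ∈ Y) ∧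
  (∀ A B : Set α, A ∈ Y → B ∈ Y → A ⊆ B → B \ A ∈ Y)

/-- A *density* on `Y` is a finitely additive probability measure `π` such that a set `A`
belongs to `Y` iff it can be approximated from inside and outside by members of `Y`. -/
def IsDensity {α : Type*} (Y : Set (Set α)) (π : Set α → ℝ) : Prop :=
  (∀ A ∈ Y, 0 ≤ π A ∧ π A ≤ 1) ∧
  π Set.univ = 1 ∧
  (∀ A B : Set α, A ∈ Y → B ∈ Y → A ∩ B = ∅ → π (A ∪ B) = π A + π B) ∧
  (∀ A : Set α, A ∈ Y ↔
    ∀ ε : ℝ, 0 < ε → ∃ A₁ ∈ Y, ∃ A₂ ∈ Y, A₁ ⊆ A ∧ A ⊆ A₂ ∧ π A₂ - π A₁ < ε)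

/-- `π` has the *Darboux property* on `Y`. -/
def HasDarboux {α : Type*} (Y : Set (Set α)) (π : Set α → ℝ) : Prop :=
  ∀ A ∈ Y, ∀ c : ℝ, 0 ≤ c → c ≤ π A → ∃ B ∈ Y, B ⊆ A ∧ π B = c

/-- A mapping `x : M → [0,1]` is `π`-uniformly measurable if for each subinterval
`I ⊆ [0,1]` the preimage `x⁻¹(I)` belongs to `Y` and `π (x⁻¹(I)) = |I|`. -/
def UnifMeasurable {α : Type*} (Y : Set (Set α)) (π : Set α → ℝ) (x : α → ℝ) : Prop :=
  ∀ a b : ℝ, 0 ≤ a → a ≤ b → b ≤ 1 →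
    ∀ I : Set ℝ, (I = Set.Icc a b ∨ I = Set.Ico a b ∨ I = Set.Ioc a b ∨ I = Set.Ioo a b) →
      x ⁻¹' I ∈ Y ∧ π (x ⁻¹' I) = b - a

lemma qa_empty_mem {Y : Set (Set ℕ)} (hY : IsQAlgebra Y) : (∅ : Set ℕ) ∈ Y := by
  simpa using hY.2.2 Set.univ Set.univ hY.1 hY.1 subset_rfl

lemma qa_pi_empty {Y : Set (Set ℕ)} {π : Set ℕ → ℝ} (hY : IsQAlgebra Y)
    (hπ : IsDensity Y π) : π ∅ = 0 := by
  have h := hπ.2.2.1 ∅ ∅ (qa_empty_mem hY) (qa_empty_mem hY) (by simp)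
  simp only [Set.union_empty] at h
  linarith

lemma qa_diff {Y : Set (Set ℕ)} {π : Set ℕ → ℝ} (hY : IsQAlgebra Y) (hπ : IsDensity Y π)
    {A B : Set ℕ} (hA : A ∈ Y) (hB : B ∈ Y) (hAB : A ⊆ B) :
    B \ A ∈ Y ∧ π (B \ A) = π B - π A ∧ π A ≤ π B := by
  have hd : B \ A ∈ Y := hY.2.2 A B hA hB hAB
  have hu := hπ.2.2.1 A (B \ A) hA hd (by rw [Set.inter_diff_self])
  rw [Set.union_diff_cancel hAB] at hu
  have h0 := (hπ.1 _ hd).1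
  exact ⟨hd, by linarith, by linarith⟩

lemma qa_finset_union {Y : Set (Set ℕ)} {π : Set ℕ → ℝ} (hY : IsQAlgebra Y)
    (hπ : IsDensity Y π) (T : Finset ℕ) (f : ℕ → Set ℕ) :
    (∀ j ∈ T, f j ∈ Y) → (∀ j ∈ T, ∀ k ∈ T, j ≠ k → f j ∩ f k = ∅) →
    (⋃ j ∈ T, f j) ∈ Y ∧ π (⋃ j ∈ T, f j) = ∑ j ∈ T, π (f j) := by
  classical
  induction T using Finset.induction_on with
  | empty => intro _ _; simp [qa_empty_mem hY, qa_pi_empty hY hπ]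
  | insert a s ha ih =>
    intro hf hdisj
    have hfs : ∀ j ∈ s, f j ∈ Y := fun j hj => hf j (Finset.mem_insert_of_mem hj)
    have hds : ∀ j ∈ s, ∀ k ∈ s, j ≠ k → f j ∩ f k = ∅ := fun j hj k hk hjk =>
      hdisj j (Finset.mem_insert_of_mem hj) k (Finset.mem_insert_of_mem hk) hjk
    obtain ⟨hUY, hUπ⟩ := ih hfs hds
    have hfa : f a ∈ Y := hf a (Finset.mem_insert_self a s)
    have hint : f a ∩ (⋃ j ∈ s, f j) = ∅ := by
      ext n
      simp only [Set.mem_inter_iff, Set.mem_iUnion, exists_prop,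
        Set.mem_empty_iff_false, iff_false, not_and, not_exists]
      rintro hna j hjs hnj
      have haj : a ≠ j := by rintro rfl; exact ha hjs
      have := hdisj a (Finset.mem_insert_self a s) j (Finset.mem_insert_of_mem hjs) haj
      have : n ∈ f a ∩ f j := ⟨hna, hnj⟩
      rw [‹f a ∩ f j = ∅›] at this
      exact this
    have hset : (⋃ j ∈ insert a s, f j) = f a ∪ ⋃ j ∈ s, f j := by
      simp [Finset.set_biUnion_insert]
    rw [hset, Finset.sum_insert ha, ← hUπ]
    exact ⟨hY.2.1 _ _ hfa hUY hint, hπ.2.2.1 _ _ hfa hUY hint⟩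

lemma qa_Ico_pre {Y : Set (Set ℕ)} {π : Set ℕ → ℝ} {y : ℕ → ℝ} (hY : IsQAlgebra Y)
    (hπ : IsDensity Y π) (hy01 : ∀ n, y n ∈ Set.Icc (0 : ℝ) 1) (hy : UnifMeasurable Y π y)
    (u v : ℝ) (hu : 0 ≤ u) (huv : u ≤ v) :
    y ⁻¹' Set.Ico u v ∈ Y ∧ π (y ⁻¹' Set.Ico u v) ≤ v - u := by
  rcases le_or_gt v 1 with hv | hv
  · have h := hy u v hu huv hv _ (Or.inr (Or.inl rfl))
    exact ⟨h.1, le_of_eq h.2⟩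
  rcases le_or_gt u 1 with hu1 | hu1
  · have hset : y ⁻¹' Set.Ico u v = y ⁻¹' Set.Icc u 1 := by
      ext n
      have hn := hy01 n
      simp only [Set.mem_preimage, Set.mem_Ico, Set.mem_Icc]
      exact ⟨fun ⟨h1, _⟩ => ⟨h1, hn.2⟩, fun ⟨h1, h2⟩ => ⟨h1, lt_of_le_of_lt hn.2 hv⟩⟩
    have h := hy u 1 hu hu1 le_rfl _ (Or.inl rfl)
    rw [hset]
    exact ⟨h.1, by rw [h.2]; linarith⟩
  · have hset : y ⁻¹' Set.Ico u v = ∅ := by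
      ext n
      simp only [Set.mem_preimage, Set.mem_Ico, Set.mem_empty_iff_false, iff_false, not_and]
      intro h1
      exact absurd h1 (by linarith [(hy01 n).2])
    rw [hset, qa_pi_empty hY hπ]
    exact ⟨qa_empty_mem hY, by linarith⟩

lemma qa_mix_pre {Y : Set (Set ℕ)} {π : Set ℕ → ℝ} {y : ℕ → ℝ} (hY : IsQAlgebra Y)
    (hπ : IsDensity Y π) (hy01 : ∀ n, y n ∈ Set.Icc (0 : ℝ) 1) (hy : UnifMeasurable Y π y)
    (p q u v : ℝ) (hp : 0 ≤ p) (hq : q ≤ 1) (hu : 0 ≤ u) :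
    y ⁻¹' (Set.Icc p q ∩ Set.Ico u v) ∈ Y := by
  have hl0 : 0 ≤ max p u := le_trans hp (le_max_left _ _)
  rcases le_or_gt v q with hvq | hvq
  · have hset : Set.Icc p q ∩ Set.Ico u v = Set.Ico (max p u) v := by
      ext t
      simp only [Set.mem_inter_iff, Set.mem_Icc, Set.mem_Ico, max_le_iff]
      constructor
      · rintro ⟨⟨h1, h2⟩, h3, h4⟩; exact ⟨⟨h1, h3⟩, h4⟩
      · rintro ⟨⟨h1, h3⟩, h4⟩; exact ⟨⟨h1, le_trans (le_of_lt h4) hvq⟩, h3, h4⟩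
    rw [hset]
    rcases le_or_gt (max p u) v with hlv | hlv
    · exact (qa_Ico_pre hY hπ hy01 hy _ v hl0 hlv).1
    · rw [Set.Ico_eq_empty (not_lt.mpr hlv.le), Set.preimage_empty]
      exact qa_empty_mem hY
  · have hset : Set.Icc p q ∩ Set.Ico u v = Set.Icc (max p u) q := by
      ext t
      simp only [Set.mem_inter_iff, Set.mem_Icc, Set.mem_Ico, max_le_iff]
      constructor
      · rintro ⟨⟨h1, h2⟩, h3, h4⟩; exact ⟨⟨h1, h3⟩, h2⟩
      · rintro ⟨⟨h1, h3⟩, h2⟩; exact ⟨⟨h1, h2⟩, h3, lt_of_le_of_lt h2 hvq⟩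
    rw [hset]
    rcases le_or_gt (max p u) q with hlq | hlq
    · exact (hy _ q hl0 hlq hq _ (Or.inl rfl)).1
    · rw [Set.Icc_eq_empty (not_le.mpr hlq), Set.preimage_empty]
      exact qa_empty_mem hY

theorem unifMeasurable_of_close {Y : Set (Set ℕ)} {π : Set ℕ → ℝ}
    (hY : IsQAlgebra Y) (hπ : IsDensity Y π) (hD : HasDarboux Y π)
    (y x : ℕ → ℝ) (hy01 : ∀ n, y n ∈ Set.Icc (0 : ℝ) 1) (hx01 : ∀ n, x n ∈ Set.Icc (0 : ℝ) 1)
    (hy : UnifMeasurable Y π y)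
    (hclose : Tendsto (fun n => |y n - x n|) atTop (𝓝 0)) :
    UnifMeasurable Y π x := by
  classical
  intro a b ha hab hb1 I hI
  have hIsub : I ⊆ Set.Icc a b := by
    rcases hI with rfl | rfl | rfl | rfl
    · exact subset_rfl
    · exact Set.Ico_subset_Icc_self
    · exact Set.Ioc_subset_Icc_self
    · exact Set.Ioo_subset_Icc_self
  have hIsup : Set.Ioo a b ⊆ I := by
    rcases hI with rfl | rfl | rfl | rfl
    · exact Set.Ioo_subset_Icc_self
    · exact Set.Ioo_subset_Ico_self
    · exact Set.Ioo_subset_Ioc_self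
    · exact subset_rfl
  have key : ∀ ε : ℝ, 0 < ε → ∃ A₁ ∈ Y, ∃ A₂ ∈ Y, A₁ ⊆ x ⁻¹' I ∧ x ⁻¹' I ⊆ A₂ ∧
      b - a - ε ≤ π A₁ ∧ π A₂ ≤ b - a + ε := by
    intro ε hε
    set δ : ℝ := ε / 8 with hδdef
    have hδ : 0 < δ := by positivity
    obtain ⟨N, hN⟩ : ∃ N, ∀ n ≥ N, |y n - x n| < δ := by
      have hev : ∀ᶠ n in atTop, |y n - x n| < δ := hclose (Iio_mem_nhds hδ)
      exact Filter.eventually_atTop.mp hev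
    set w : ℝ := ε / (8 * ((N : ℝ) + 1)) with hwdef
    have hw : 0 < w := by positivity
    set C : ℕ → Set ℝ := fun j => Set.Ico ((j : ℝ) * w) (((j : ℝ) + 1) * w) with hCdef
    set idx : ℕ → ℕ := fun n => ⌊y n / w⌋₊ with hidxdef
    have hidx : ∀ n, y n ∈ C (idx n) := by
      intro n
      have h0 : 0 ≤ y n := (hy01 n).1
      have hfl : ((idx n : ℝ)) ≤ y n / w := Nat.floor_le (div_nonneg h0 hw.le)
      have hfl2 : y n / w < (idx n : ℝ) + 1 := Nat.lt_floor_add_one _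
      constructor
      · calc ((idx n : ℝ)) * w ≤ (y n / w) * w := mul_le_mul_of_nonneg_right hfl hw.le
          _ = y n := by field_simp
      · calc y n = (y n / w) * w := by field_simp
          _ < ((idx n : ℝ) + 1) * w := mul_lt_mul_of_pos_right hfl2 hw
    have hCdisj' : ∀ j k : ℕ, j < k → C j ∩ C k = ∅ := by
      intro j k hlt
      ext t
      simp only [hCdef, Set.mem_inter_iff, Set.mem_Ico, Set.mem_empty_iff_false, iff_false,
        not_and]
      rintro ⟨h1, h2⟩ h3
      have hc : ((j : ℝ) + 1) ≤ (k : ℝ) := by exact_mod_cast hlt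
      have := mul_le_mul_of_nonneg_right hc hw.le
      linarith
    have hCdisj : ∀ j k : ℕ, j ≠ k → C j ∩ C k = ∅ := by
      intro j k hjk
      rcases hjk.lt_or_gt with hlt | hlt
      · exact hCdisj' j k hlt
      · rw [Set.inter_comm]; exact hCdisj' k j hlt
    set T : Finset ℕ := (Finset.range N).image idx with hTdef
    set P : ℕ → Set ℕ := fun j => y ⁻¹' C j with hPdef
    have hPY : ∀ j : ℕ, P j ∈ Y ∧ π (P j) ≤ w := by
      intro j
      have h0 : (0 : ℝ) ≤ (j : ℝ) * w := by positivity
      have h1 : (j : ℝ) * w ≤ ((j : ℝ) + 1) * w := by nlinarith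
      have h := qa_Ico_pre hY hπ hy01 hy _ _ h0 h1
      refine ⟨h.1, ?_⟩
      have h2 := h.2
      have h3 : ((j : ℝ) + 1) * w - (j : ℝ) * w = w := by ring
      linarith
    have hPdisj : ∀ j k : ℕ, j ≠ k → P j ∩ P k = ∅ := by
      intro j k hjk
      rw [hPdef]
      simp only
      rw [← Set.preimage_inter, hCdisj j k hjk, Set.preimage_empty]
    set S : Set ℕ := ⋃ j ∈ T, P j with hSdef
    obtain ⟨hSY, hSπeq⟩ := qa_finset_union hY hπ T P (fun j _ => (hPY j).1)
      (fun j _ k _ hjk => hPdisj j k hjk)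
    have hTcard : (T.card : ℝ) ≤ (N : ℝ) := by
      have h := Finset.card_image_le (s := Finset.range N) (f := idx)
      rw [Finset.card_range] at h
      exact_mod_cast h
    have hSπ : π S ≤ ε / 8 := by
      have h1 : π S ≤ (T.card : ℝ) * w := by
        rw [hSπeq]
        calc ∑ j ∈ T, π (P j) ≤ ∑ _j ∈ T, w := Finset.sum_le_sum (fun j _ => (hPY j).2)
          _ = (T.card : ℝ) * w := by rw [Finset.sum_const, nsmul_eq_mul]
      have h2 : (T.card : ℝ) * w ≤ (N : ℝ) * w := mul_le_mul_of_nonneg_right hTcard hw.le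
      have h3 : (N : ℝ) * w ≤ ε / 8 := by
        rw [hwdef, mul_div_assoc', div_le_div_iff₀ (by positivity) (by norm_num)]
        have hN0 : (0 : ℝ) ≤ (N : ℝ) := Nat.cast_nonneg N
        nlinarith
      linarith
    have hmemS : ∀ n, n < N → n ∈ S := by
      intro n hn
      have hjT : idx n ∈ T := Finset.mem_image.mpr ⟨n, Finset.mem_range.mpr hn, rfl⟩
      exact Set.mem_biUnion hjT (hidx n)
    have hpiece : ∀ (p q : ℝ), ∀ j k : ℕ, j ≠ k →
        y ⁻¹' (Set.Icc p q ∩ C j) ∩ y ⁻¹' (Set.Icc p q ∩ C k) = ∅ := by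
      intro p q j k hjk
      rw [← Set.preimage_inter]
      have h : (Set.Icc p q ∩ C j) ∩ (Set.Icc p q ∩ C k) = ∅ := by
        ext t
        simp only [Set.mem_inter_iff, Set.mem_empty_iff_false, iff_false, not_and]
        rintro ⟨_, hj⟩ _ hk
        have ht : t ∈ C j ∩ C k := ⟨hj, hk⟩
        rw [hCdisj j k hjk] at ht
        exact ht
      rw [h, Set.preimage_empty]
    -- outer set
    set p2 : ℝ := max (a - δ) 0 with hp2def
    set q2 : ℝ := min (b + δ) 1 with hq2def
    have hp20 : 0 ≤ p2 := le_max_right _ _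
    have hq21 : q2 ≤ 1 := min_le_right _ _
    have hp2q2 : p2 ≤ q2 := by
      apply max_le
      · apply le_min <;> linarith
      · apply le_min <;> linarith
    have hU2 := hy p2 q2 hp20 hp2q2 hq21 _ (Or.inl rfl)
    have hπU2 : π (y ⁻¹' Set.Icc p2 q2) ≤ b - a + 2 * δ := by
      rw [hU2.2]
      have h1 : q2 ≤ b + δ := min_le_left _ _
      have h2 : a - δ ≤ p2 := le_max_left _ _
      linarith
    set S' : Set ℕ := ⋃ j ∈ T, y ⁻¹' (Set.Icc p2 q2 ∩ C j) with hS'def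
    obtain ⟨hS'Y, _⟩ := qa_finset_union hY hπ T (fun j => y ⁻¹' (Set.Icc p2 q2 ∩ C j))
      (fun j _ => qa_mix_pre hY hπ hy01 hy p2 q2 _ _ hp20 hq21 (by positivity))
      (fun j _ k _ hjk => hpiece p2 q2 j k hjk)
    have hS'subS : S' ⊆ S := by
      intro n hn
      simp only [hS'def, Set.mem_iUnion, exists_prop] at hn
      obtain ⟨j, hjT, hnj⟩ := hn
      exact Set.mem_biUnion hjT (Set.mem_preimage.mpr (Set.mem_preimage.mp hnj).2)
    have hS'subU : S' ⊆ y ⁻¹' Set.Icc p2 q2 := by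
      intro n hn
      simp only [hS'def, Set.mem_iUnion, exists_prop] at hn
      obtain ⟨j, _, hnj⟩ := hn
      exact Set.mem_preimage.mpr (Set.mem_preimage.mp hnj).1
    obtain ⟨hS''Y, hS''eq, hS'le⟩ := qa_diff hY hπ hS'Y hSY hS'subS
    have hS''π : π (S \ S') ≤ ε / 8 := by
      have h0 := (hπ.1 _ hS'Y).1
      linarith
    have hdisjU2S'' : y ⁻¹' Set.Icc p2 q2 ∩ (S \ S') = ∅ := by
      rw [Set.eq_empty_iff_forall_notMem]
      rintro n ⟨hnU, hnS, hnS'⟩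
      apply hnS'
      rw [hSdef] at hnS
      simp only [Set.mem_iUnion, exists_prop] at hnS
      obtain ⟨j, hjT, hnj⟩ := hnS
      exact Set.mem_biUnion hjT (Set.mem_preimage.mpr (Set.mem_inter hnU hnj))
    have hA₂Y : y ⁻¹' Set.Icc p2 q2 ∪ (S \ S') ∈ Y := hY.2.1 _ _ hU2.1 hS''Y hdisjU2S''
    have hA₂π : π (y ⁻¹' Set.Icc p2 q2 ∪ (S \ S')) ≤ b - a + ε := by
      have hadd := hπ.2.2.1 _ _ hU2.1 hS''Y hdisjU2S''
      rw [hadd]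
      linarith
    have hxsubA₂ : x ⁻¹' I ⊆ y ⁻¹' Set.Icc p2 q2 ∪ (S \ S') := by
      intro n hn
      by_cases hnN : n < N
      · have hnS : n ∈ S := hmemS n hnN
        by_cases hnS' : n ∈ S'
        · exact Set.mem_union_left _ (hS'subU hnS')
        · exact Set.mem_union_right _ ⟨hnS, hnS'⟩
      · have habs := abs_lt.mp (hN n (le_of_not_gt hnN))
        have hxI := hIsub hn
        have hx1 : a ≤ x n := hxI.1
        have hx2 : x n ≤ b := hxI.2
        apply Set.mem_union_left
        show y n ∈ Set.Icc p2 q2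
        constructor
        · apply max_le
          · linarith [habs.1, habs.2]
          · exact (hy01 n).1
        · apply le_min
          · linarith [habs.1, habs.2]
          · exact (hy01 n).2
    rcases le_or_gt (b - a) (2 * δ) with hsmall | hbig
    · refine ⟨∅, qa_empty_mem hY, _, hA₂Y, Set.empty_subset _, hxsubA₂, ?_, hA₂π⟩
      rw [qa_pi_empty hY hπ]
      linarith
    · have hp1 : 0 ≤ a + δ := by linarith
      have hq1 : b - δ ≤ 1 := by linarith
      have h12 : a + δ ≤ b - δ := by linarith
      have hU1 := hy (a + δ) (b - δ) hp1 h12 hq1 _ (Or.inl rfl)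
      set S₁ : Set ℕ := ⋃ j ∈ T, y ⁻¹' (Set.Icc (a + δ) (b - δ) ∩ C j) with hS₁def
      obtain ⟨hS₁Y, _⟩ := qa_finset_union hY hπ T
        (fun j => y ⁻¹' (Set.Icc (a + δ) (b - δ) ∩ C j))
        (fun j _ => qa_mix_pre hY hπ hy01 hy _ _ _ _ hp1 hq1 (by positivity))
        (fun j _ k _ hjk => hpiece _ _ j k hjk)
      have hS₁subU : S₁ ⊆ y ⁻¹' Set.Icc (a + δ) (b - δ) := by
        intro n hn
        simp only [hS₁def, Set.mem_iUnion, exists_prop] at hn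
        obtain ⟨j, _, hnj⟩ := hn
        exact Set.mem_preimage.mpr (Set.mem_preimage.mp hnj).1
      have hS₁subS : S₁ ⊆ S := by
        intro n hn
        simp only [hS₁def, Set.mem_iUnion, exists_prop] at hn
        obtain ⟨j, hjT, hnj⟩ := hn
        exact Set.mem_biUnion hjT (Set.mem_preimage.mpr (Set.mem_preimage.mp hnj).2)
      obtain ⟨hA₁Y, hA₁eq, _⟩ := qa_diff hY hπ hS₁Y hU1.1 hS₁subU
      have hS₁le : π S₁ ≤ π S := (qa_diff hY hπ hS₁Y hSY hS₁subS).2.2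
      refine ⟨y ⁻¹' Set.Icc (a + δ) (b - δ) \ S₁, hA₁Y, _, hA₂Y, ?_, hxsubA₂, ?_, hA₂π⟩
      · rintro n ⟨hnU, hnS₁⟩
        by_cases hnN : n < N
        · exfalso
          apply hnS₁
          have hjT : idx n ∈ T := Finset.mem_image.mpr ⟨n, Finset.mem_range.mpr hnN, rfl⟩
          exact Set.mem_biUnion hjT
            (Set.mem_preimage.mpr (Set.mem_inter (Set.mem_preimage.mp hnU) (hidx n)))
        · have habs := abs_lt.mp (hN n (le_of_not_gt hnN))
          have hyn := Set.mem_preimage.mp hnU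
          have hy1 : a + δ ≤ y n := hyn.1
          have hy2 : y n ≤ b - δ := hyn.2
          apply hIsup
          exact ⟨by linarith [habs.2], by linarith [habs.1]⟩
      · rw [hA₁eq, hU1.2]
        linarith
  have hmem : x ⁻¹' I ∈ Y := by
    rw [hπ.2.2.2]
    intro ε hε
    obtain ⟨A₁, h1, A₂, h2, hs1, hs2, hb1', hb2'⟩ := key (ε / 3) (by linarith)
    exact ⟨A₁, h1, A₂, h2, hs1, hs2, by linarith⟩
  refine ⟨hmem, ?_⟩
  by_contra hne
  rcases lt_or_gt_of_ne hne with hlt | hgt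
  · obtain ⟨A₁, h1, A₂, h2, hs1, hs2, hb1', hb2'⟩ :=
      key ((b - a - π (x ⁻¹' I)) / 2) (by linarith)
    have hmono := (qa_diff hY hπ h1 hmem hs1).2.2
    linarith
  · obtain ⟨A₁, h1, A₂, h2, hs1, hs2, hb1', hb2'⟩ :=
      key ((π (x ⁻¹' I) - (b - a)) / 2) (by linarith)
    have hmono := (qa_diff hY hπ hmem h2 hs2).2.2
    linarith
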